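/- The trivial graded ring functor $\mathbb{T}: \mathrm{Ring}_2 \to \mathrm{Igr}$ (sending an $\mathbb{F}_2$-algebra $A$ to the inductive graded ring with level 0 equal to $\mathbb{F}_2$ and all levels $n \geq 1$ equal to $A$ with identity transition maps) is full and faithful, and the functor $\mathbb{A}: \mathrm{Igr} \to \mathrm{Ring}_2$, $\mathbb{A}(R) = \varinjlim_{n} R_n$, is left adjoint to $\mathbb{T}$; moreover $\mathbb{A} \circ \mathbb{T}$ is naturally isomorphic to the identity functor on $\mathrm{Ring}_2$. -/

import Mathlib

namespace IgrPaper

/-- Data of an inductive graded ring: a family of carriers, additions, pointed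
elements `⊤ₙ` and zero, and graded multiplications. -/
structure IgrData : Type 1 where
  C : ℕ → Type
  add : ∀ {n}, C n → C n → C n
  zero : ∀ n, C n
  top : ∀ n, C n
  mul : ∀ {n m}, C n → C m → C (n + m)

namespace IgrData

/-- The transition map `hₙ = ⊤₁ *₁ₙ (-) : Rₙ → Rₙ₊₁`. -/
def h (R : IgrData) {n : ℕ} (x : R.C n) : R.C (n + 1) :=
  cast (congrArg R.C (Nat.add_comm 1 n)) (R.mul (R.top 1) x)

/-- The axioms of an inductive graded ring. -/
structure IsIgr (R : IgrData) : Prop where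
  add_assoc : ∀ {n} (x y z : R.C n), R.add (R.add x y) z = R.add x (R.add y z)
  add_comm : ∀ {n} (x y : R.C n), R.add x y = R.add y x
  add_zero : ∀ {n} (x : R.C n), R.add x (R.zero n) = x
  add_self : ∀ {n} (x : R.C n), R.add x x = R.zero n
  zero_ne_top : R.zero 0 ≠ R.top 0
  level0 : ∀ x : R.C 0, x = R.zero 0 ∨ x = R.top 0
  mul_add : ∀ {n m} (x : R.C n) (y z : R.C m),
    R.mul x (R.add y z) = R.add (R.mul x y) (R.mul x z)
  add_mul : ∀ {n m} (x y : R.C n) (z : R.C m),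
    R.mul (R.add x y) z = R.add (R.mul x z) (R.mul y z)
  mul_assoc : ∀ {n m p} (x : R.C n) (y : R.C m) (z : R.C p),
    HEq (R.mul (R.mul x y) z) (R.mul x (R.mul y z))
  mul_comm : ∀ {n m} (x : R.C n) (y : R.C m), HEq (R.mul x y) (R.mul y x)
  mul_top0 : ∀ {n} (x : R.C n), R.mul x (R.top 0) = x
  top_mul_top : ∀ n m, R.mul (R.top n) (R.top m) = R.top (n + m)
  h_top : ∀ n, R.h (R.top n) = R.top (n + 1)
  h_compat : ∀ {n m} (x : R.C n) (y : R.C m),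
    HEq (R.mul (R.h x) (R.h y)) (R.h (R.h (R.mul x y)))

/-- Morphism of inductive graded rings: a levelwise family of pointed group
homomorphisms whose direct sum is a unital ring homomorphism. -/
structure IsIgrHom (R S : IgrData) (f : ∀ n, R.C n → S.C n) : Prop where
  map_add : ∀ (n : ℕ) (x y : R.C n), f n (R.add x y) = S.add (f n x) (f n y)
  map_zero : ∀ n, f n (R.zero n) = S.zero n
  map_top : ∀ n, f n (R.top n) = S.top n
  map_mul : ∀ (n m : ℕ) (x : R.C n) (y : R.C m),
    f (n + m) (R.mul x y) = S.mul (f n x) (f m y)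

/-- Iterated transition map `Rₙ → Rₙ₊ₖ`. -/
def hIter (R : IgrData) : ∀ (k : ℕ) {n : ℕ}, R.C n → R.C (n + k)
  | 0, _, x => x
  | k+1, _, x => R.h (R.hIter k x)

/-- Pure products of `n` elements of level 1. -/
inductive Pure1 (R : IgrData) : ∀ n, R.C n → Prop
  | base (a : R.C 1) : Pure1 R 1 a
  | step {n : ℕ} (x : R.C n) (a : R.C 1) : Pure1 R n x → Pure1 R (n + 1) (R.mul x a)

/-- Elements additively generated by pure products of level-1 elements. -/
inductive Gen1 (R : IgrData) : ∀ n, R.C n → Prop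
  | pure {n : ℕ} (x : R.C n) : Pure1 R n x → Gen1 R n x
  | zero (n : ℕ) : Gen1 R n (R.zero n)
  | add {n : ℕ} (x y : R.C n) : Gen1 R n x → Gen1 R n y → Gen1 R n (R.add x y)

/-- `R` is generated at level 1 (the condition defining `Igr₁`). -/
def GeneratedAt1 (R : IgrData) : Prop := ∀ n, 1 ≤ n → ∀ x : R.C n, Gen1 R n x

/-- The "hyperbolic" condition defining `Igr_h`: `a *₁₁ a = ⊤₁ *₁₁ a`. -/
def HCond (R : IgrData) : Prop := ∀ a : R.C 1, R.mul a a = R.mul (R.top 1) a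

/-- Membership in `Igr₊ = Igr₁ ∩ Igr_h`. -/
def IgrPlus (R : IgrData) : Prop := GeneratedAt1 R ∧ HCond R

/-- Marshall-type condition: all transition maps are injective. -/
def MC (R : IgrData) : Prop := ∀ n, Function.Injective fun x : R.C n => R.h x

end IgrData
end IgrPaper
namespace IgrPaper
namespace IgrData

/-- One-step relation generating the colimit of the system `(Rₙ, hₙ)`. -/
def colimRel (R : IgrData) : (Σ n, R.C n) → (Σ n, R.C n) → Prop :=
  fun p q => q = ⟨p.1 + 1, R.h p.2⟩

/-- The colimit `𝔸(R) = colimₙ Rₙ`. -/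
def Colim (R : IgrData) : Type := Quot (colimRel R)

/-- The canonical cocone map `Rₙ → 𝔸(R)`. -/
def cmk (R : IgrData) {n : ℕ} (x : R.C n) : Colim R := Quot.mk _ ⟨n, x⟩

/-- Multiplication on the colimit ring `𝔸(R)`. -/
noncomputable def cmul (R : IgrData) (a b : Colim R) : Colim R :=
  Quot.mk _ ⟨a.out.1 + b.out.1, R.mul a.out.2 b.out.2⟩

/-- Addition on the colimit ring `𝔸(R)`. -/
noncomputable def cadd (R : IgrData) (a b : Colim R) : Colim R :=
  Quot.mk _ ⟨a.out.1 + b.out.1,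
    R.add (R.hIter b.out.1 a.out.2)
      (cast (congrArg R.C (Nat.add_comm b.out.1 a.out.1)) (R.hIter a.out.1 b.out.2))⟩

/-- The levels of the trivial inductive graded ring `𝕋(B)`. -/
abbrev TC (B : Type) : ℕ → Type
  | 0 => ZMod 2
  | _+1 => B

/-- The trivial inductive graded ring `𝕋(B)` on a commutative ring `B`:
`𝔽₂` at level 0 and `B` at all higher levels, with identity transitions. -/
def TData (B : Type) [CommRing B] : IgrData where
  C := TC B
  add := fun {n} => match n with
    | 0 => fun x y => ((x : ZMod 2) + (y : ZMod 2) : ZMod 2)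
    | _+1 => fun x y => ((x : B) + (y : B) : B)
  zero := fun n => match n with
    | 0 => ((0 : ZMod 2) : TC B 0)
    | k+1 => ((0 : B) : TC B (k+1))
  top := fun n => match n with
    | 0 => ((1 : ZMod 2) : TC B 0)
    | k+1 => ((1 : B) : TC B (k+1))
  mul := fun {n m} => match n, m with
    | 0, 0 => fun x y => ((x : ZMod 2) * (y : ZMod 2) : ZMod 2)
    | 0, _+1 => fun x b => (if (x : ZMod 2) = 1 then (b : B) else (0 : B) : B)
    | _+1, 0 => fun b x => (if (x : ZMod 2) = 1 then (b : B) else (0 : B) : B)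
    | _+1, _+1 => fun a b => ((a : B) * (b : B) : B)

/-- The levels of `𝕋(𝔸(R))`. -/
abbrev TCc (R : IgrData) : ℕ → Type
  | 0 => ZMod 2
  | _+1 => Colim R

/-- The inductive graded ring `𝕋(𝔸(R))`. -/
noncomputable def TColim (R : IgrData) : IgrData where
  C := TCc R
  add := fun {n} => match n with
    | 0 => fun x y => ((x : ZMod 2) + (y : ZMod 2) : ZMod 2)
    | _+1 => fun x y => (R.cadd x y : Colim R)
  zero := fun n => match n with
    | 0 => ((0 : ZMod 2) : TCc R 0)
    | k+1 => (R.cmk (R.zero 0) : TCc R (k+1))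
  top := fun n => match n with
    | 0 => ((1 : ZMod 2) : TCc R 0)
    | k+1 => (R.cmk (R.top 0) : TCc R (k+1))
  mul := fun {n m} => match n, m with
    | 0, 0 => fun x y => ((x : ZMod 2) * (y : ZMod 2) : ZMod 2)
    | 0, _+1 => fun x q => (if (x : ZMod 2) = 1 then (q : Colim R) else R.cmk (R.zero 0) : Colim R)
    | _+1, 0 => fun q x => (if (x : ZMod 2) = 1 then (q : Colim R) else R.cmk (R.zero 0) : Colim R)
    | _+1, _+1 => fun p q => (R.cmul p q : Colim R)

open Classical in
/-- The canonical (unit) morphism `η_R : R → 𝕋(𝔸(R))`. -/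
noncomputable def eta (R : IgrData) : ∀ n, R.C n → (TColim R).C n
  | 0 => fun x => (if x = R.top 0 then (1 : ZMod 2) else (0 : ZMod 2) : ZMod 2)
  | _+1 => fun x => (R.cmk x : Colim R)

/-- The functor `𝕋` on morphisms. -/
def Tmap {A B : Type} [CommRing A] [CommRing B] (g : A →+* B) :
    ∀ n, (TData A).C n → (TData B).C n
  | 0 => fun x => (x : ZMod 2)
  | _+1 => fun a => (g (a : A) : B)

/-- `𝕋` applied to a plain function `𝔸(R) → A`. -/
def TmapF {A : Type} [CommRing A] (R : IgrData) (g : Colim R → A) :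
    ∀ n, (TColim R).C n → (TData A).C n
  | 0 => fun x => (x : ZMod 2)
  | _+1 => fun q => (g (q : Colim R) : A)

/-- The induced map on colimits `𝔸(f) : 𝔸(R) → 𝔸(S)`. -/
noncomputable def cmap {R S : IgrData} (f : ∀ n, R.C n → S.C n) (q : Colim R) : Colim S :=
  Quot.mk _ ⟨q.out.1, f q.out.1 q.out.2⟩

end IgrData
end IgrPaper

namespace IgrPaper
namespace IgrData

section General
variable (R : IgrData)

lemma cast_triv {α : Type} (e : α = α) (x : α) : cast e x = x :=
  eq_of_heq (cast_heq e x)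

lemma cast_zero {a b : ℕ} (e : a = b) :
    cast (congrArg R.C e) (R.zero a) = R.zero b := by subst e; rfl

lemma cast_add {a b : ℕ} (e : a = b) (x y : R.C a) :
    cast (congrArg R.C e) (R.add x y)
      = R.add (cast (congrArg R.C e) x) (cast (congrArg R.C e) y) := by subst e; rfl

variable {R}

lemma h_heq {n n' : ℕ} {x : R.C n} {x' : R.C n'} (hn : n = n') (hx : HEq x x') :
    HEq (R.h x) (R.h x') := by subst hn; rw [eq_of_heq hx]

lemma hIter_heq {k k' n n' : ℕ} {x : R.C n} {x' : R.C n'} (hk : k = k') (hn : n = n')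
    (hx : HEq x x') : HEq (R.hIter k x) (R.hIter k' x') := by
  subst hk; subst hn; rw [eq_of_heq hx]

lemma hIter_comp (a b : ℕ) {n : ℕ} (x : R.C n) :
    HEq (R.hIter (a + b) x) (R.hIter b (R.hIter a x)) := by
  induction b with
  | zero => rfl
  | succ b ih =>
      show HEq (R.h (R.hIter (a + b) x)) (R.h (R.hIter b (R.hIter a x)))
      exact h_heq (Nat.add_assoc n a b).symm ih

lemma hIter_swap (a b : ℕ) {n : ℕ} (x : R.C n) :
    HEq (R.hIter a (R.hIter b x)) (R.hIter b (R.hIter a x)) :=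
  ((hIter_comp b a x).symm.trans (hIter_heq (Nat.add_comm b a) rfl HEq.rfl)).trans
    (hIter_comp a b x)

variable (hR : R.IsIgr)
include hR

lemma mul_zero' {n m : ℕ} (x : R.C n) : R.mul x (R.zero m) = R.zero (n + m) := by
  have h1 : R.add (R.zero m) (R.zero m) = R.zero m := hR.add_zero _
  have h2 := congrArg (R.mul x) h1.symm
  rw [hR.mul_add] at h2
  exact h2.trans (hR.add_self _)

lemma zero_mul' {n m : ℕ} (x : R.C m) : R.mul (R.zero n) x = R.zero (n + m) := by
  have h1 : R.add (R.zero n) (R.zero n) = R.zero n := hR.add_zero _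
  have h2 := congrArg (fun z => R.mul z x) h1.symm
  rw [hR.add_mul] at h2
  exact h2.trans (hR.add_self _)

lemma h_zero (n : ℕ) : R.h (R.zero n) = R.zero (n + 1) := by
  unfold h
  rw [mul_zero' hR, cast_zero R (Nat.add_comm 1 n)]

lemma h_add {n : ℕ} (x y : R.C n) : R.h (R.add x y) = R.add (R.h x) (R.h y) := by
  unfold h
  rw [hR.mul_add, cast_add R (Nat.add_comm 1 n)]

lemma hIter_zero (k n : ℕ) : R.hIter k (R.zero n) = R.zero (n + k) := by
  induction k with
  | zero => rfl
  | succ k ih => show R.h _ = _; rw [ih]; exact h_zero hR (n + k)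

lemma hIter_add (k : ℕ) {n : ℕ} (x y : R.C n) :
    R.hIter k (R.add x y) = R.add (R.hIter k x) (R.hIter k y) := by
  induction k with
  | zero => rfl
  | succ k ih => show R.h _ = _; rw [ih]; exact h_add hR _ _

omit hR in
lemma mul_heq {n n' m m' : ℕ} {x : R.C n} {x' : R.C n'} {y : R.C m} {y' : R.C m'}
    (hn : n = n') (hm : m = m') (hx : HEq x x') (hy : HEq y y') :
    HEq (R.mul x y) (R.mul x' y') := by
  subst hn; subst hm; rw [eq_of_heq hx, eq_of_heq hy]

omit hR in
lemma add_heq {n n' : ℕ} {x y : R.C n} {x' y' : R.C n'}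
    (hn : n = n') (hx : HEq x x') (hy : HEq y y') :
    HEq (R.add x y) (R.add x' y') := by
  subst hn; rw [eq_of_heq hx, eq_of_heq hy]

lemma mul_h_left {n m : ℕ} (x : R.C n) (y : R.C m) :
    HEq (R.mul (R.h x) y) (R.h (R.mul x y)) := by
  have e1 : HEq (R.h x) (R.mul (R.top 1) x) := cast_heq _ _
  have e2 : HEq (R.mul (R.h x) y) (R.mul (R.mul (R.top 1) x) y) :=
    mul_heq (Nat.add_comm n 1) rfl e1 HEq.rfl
  have e3 := hR.mul_assoc (R.top 1) x y
  have e4 : HEq (R.mul (R.top 1) (R.mul x y)) (R.h (R.mul x y)) := (cast_heq _ _).symm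
  exact ((e2.trans e3).trans e4)

lemma mul_h_right {n m : ℕ} (x : R.C n) (y : R.C m) :
    HEq (R.mul x (R.h y)) (R.h (R.mul x y)) := by
  have e1 : HEq (R.mul x (R.h y)) (R.mul (R.h y) x) := hR.mul_comm _ _
  have e2 : HEq (R.mul (R.h y) x) (R.h (R.mul y x)) := mul_h_left hR y x
  have e3 : HEq (R.h (R.mul y x)) (R.h (R.mul x y)) :=
    h_heq (Nat.add_comm m n) (hR.mul_comm y x)
  exact (e1.trans e2).trans e3

lemma hIter_mul {n m : ℕ} (k l : ℕ) (x : R.C n) (y : R.C m) :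
    HEq (R.mul (R.hIter k x) (R.hIter l y)) (R.hIter (k + l) (R.mul x y)) := by
  induction l with
  | zero =>
      induction k with
      | zero => rfl
      | succ k ih =>
          have e1 : HEq (R.mul (R.h (R.hIter k x)) (R.hIter 0 y))
              (R.h (R.mul (R.hIter k x) (R.hIter 0 y))) := mul_h_left hR _ _
          have e2 : HEq (R.h (R.mul (R.hIter k x) (R.hIter 0 y)))
              (R.h (R.hIter (k + 0) (R.mul x y))) := h_heq (by omega) ih
          exact e1.trans e2
  | succ l ih =>
      have e1 : HEq (R.mul (R.hIter k x) (R.h (R.hIter l y)))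
          (R.h (R.mul (R.hIter k x) (R.hIter l y))) := mul_h_right hR _ _
      have e2 : HEq (R.h (R.mul (R.hIter k x) (R.hIter l y)))
          (R.h (R.hIter (k + l) (R.mul x y))) := h_heq (by omega) ih
      exact e1.trans e2

omit hR in
lemma cmk_h {n : ℕ} (x : R.C n) : R.cmk (R.h x) = R.cmk x :=
  (Quot.sound (show R.colimRel ⟨n, x⟩ ⟨n + 1, R.h x⟩ from rfl)).symm

omit hR in
lemma cmk_hIter (k : ℕ) {n : ℕ} (x : R.C n) : R.cmk (R.hIter k x) = R.cmk x := by
  induction k with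
  | zero => rfl
  | succ k ih => exact (cmk_h _).trans ih

omit hR in
lemma cmk_heq {n m : ℕ} {x : R.C n} {y : R.C m} (e : n = m) (hh : HEq x y) :
    R.cmk x = R.cmk y := by subst e; rw [eq_of_heq hh]

/-- Two stages are identified in the colimit iff they have a common image. -/
def Reach (p q : Σ n, R.C n) : Prop :=
  ∃ k l, p.1 + k = q.1 + l ∧ HEq (R.hIter k p.2) (R.hIter l q.2)

omit hR in
lemma mk_of_reach {p q : Σ n, R.C n} (hpq : Reach p q) :
    Quot.mk (colimRel R) p = Quot.mk (colimRel R) q := by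
  obtain ⟨k, l, e, hh⟩ := hpq
  exact ((cmk_hIter k p.2).symm.trans (cmk_heq e hh)).trans (cmk_hIter l q.2)

omit hR in
lemma reach_refl (p : Σ n, R.C n) : Reach (R := R) p p := ⟨0, 0, rfl, HEq.rfl⟩

omit hR in
lemma reach_symm {p q : Σ n, R.C n} (hpq : Reach (R := R) p q) : Reach (R := R) q p := by
  obtain ⟨k, l, e, hh⟩ := hpq; exact ⟨l, k, e.symm, hh.symm⟩

omit hR in
lemma reach_trans {p q s : Σ n, R.C n} (h1 : Reach (R := R) p q) (h2 : Reach (R := R) q s) :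
    Reach (R := R) p s := by
  obtain ⟨k1, l1, e1, hh1⟩ := h1
  obtain ⟨k2, l2, e2, hh2⟩ := h2
  refine ⟨k1 + k2, l2 + l1, by omega, ?_⟩
  exact ((((hIter_comp k1 k2 p.2).trans (hIter_heq rfl e1 hh1)).trans
    (hIter_swap k2 l1 q.2)).trans (hIter_heq rfl e2 hh2)).trans
    (hIter_comp l2 l1 s.2).symm

omit hR in
lemma reach_of_mk_eq {p q : Σ n, R.C n}
    (hpq : Quot.mk (colimRel R) p = Quot.mk (colimRel R) q) : Reach (R := R) p q := by
  have hgen := Quot.eqvGen_exact hpq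
  clear hpq
  induction hgen with
  | rel a b hab =>
      subst hab
      exact ⟨1, 0, rfl, HEq.rfl⟩
  | refl a => exact reach_refl a
  | symm a b _ ih => exact reach_symm ih
  | trans a b c _ _ ih1 ih2 => exact reach_trans ih1 ih2

omit hR in
lemma out_reach (a : Colim R) {n : ℕ} (x : R.C n) (ha : a = R.cmk x) :
    Reach (R := R) a.out ⟨n, x⟩ :=
  reach_of_mk_eq (a.out_eq.trans ha)

omit hR in
lemma mk_of_reach' {np nq k l : ℕ} {xp : R.C np} {xq : R.C nq} (e : np + k = nq + l)
    (hh : HEq (R.hIter k xp) (R.hIter l xq)) :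
    Quot.mk (colimRel R) ⟨np, xp⟩ = Quot.mk (colimRel R) ⟨nq, xq⟩ :=
  mk_of_reach ⟨k, l, e, hh⟩

omit hR in
lemma out_reach' (a : Colim R) {n : ℕ} (x : R.C n) (ha : a = R.cmk x) :
    ∃ k l, a.out.1 + k = n + l ∧ HEq (R.hIter k a.out.2) (R.hIter l x) :=
  out_reach a x ha

omit hR in
lemma reach_up {n m k l K L : ℕ} {x : R.C n} {y : R.C m} (e : n + k = m + l)
    (hh : HEq (R.hIter k x) (R.hIter l y)) (hK : k ≤ K) (hKL : n + K = m + L) :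
    HEq (R.hIter K x) (R.hIter L y) := by
  obtain ⟨d, rfl⟩ := Nat.exists_eq_add_of_le hK
  have hL : L = l + d := by omega
  subst hL
  exact (hIter_comp k d x).trans ((hIter_heq rfl e hh).trans (hIter_comp l d y).symm)

lemma cadd_mk {n : ℕ} (x y : R.C n) :
    R.cadd (R.cmk x) (R.cmk y) = R.cmk (R.add x y) := by
  obtain ⟨k, l, e, hh⟩ := out_reach' (R.cmk x) x rfl
  obtain ⟨k', l', e', hh'⟩ := out_reach' (R.cmk y) y rfl
  apply mk_of_reach' (k := k + k') (l := n + l + l') (by omega)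
  rw [hIter_add hR, hIter_add hR]
  refine add_heq (by omega) ?_ ?_
  · exact (hIter_comp _ _ _).symm.trans (reach_up e hh (by omega) (by omega))
  · refine (hIter_heq rfl (Nat.add_comm _ _) (cast_heq _ _)).trans ?_
    exact (hIter_comp _ _ _).symm.trans (reach_up e' hh' (by omega) (by omega))

lemma cmul_mk {n m : ℕ} (x : R.C n) (y : R.C m) :
    R.cmul (R.cmk x) (R.cmk y) = R.cmk (R.mul x y) := by
  obtain ⟨k, l, e, hh⟩ := out_reach' (R.cmk x) x rfl
  obtain ⟨k', l', e', hh'⟩ := out_reach' (R.cmk y) y rfl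
  apply mk_of_reach' (k := k + k') (l := l + l') (by omega)
  exact (hIter_mul hR k k' _ _).symm.trans
    ((mul_heq e e' hh hh').trans (hIter_mul hR l l' x y))

omit hR in
lemma apply_cast {S : IgrData} (f : ∀ n, R.C n → S.C n) {a b : ℕ} (e : a = b) (x : R.C a) :
    f b (cast (congrArg R.C e) x) = cast (congrArg S.C e) (f a x) := by subst e; rfl

omit hR in
lemma hom_h {S : IgrData} {f : ∀ n, R.C n → S.C n} (hf : IsIgrHom R S f) {n : ℕ}
    (x : R.C n) : f (n + 1) (R.h x) = S.h (f n x) := by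
  unfold h
  rw [apply_cast f (Nat.add_comm 1 n), hf.map_mul, hf.map_top]

omit hR in
lemma hom_hIter {S : IgrData} {f : ∀ n, R.C n → S.C n} (hf : IsIgrHom R S f) (k : ℕ)
    {n : ℕ} (x : R.C n) : f (n + k) (R.hIter k x) = S.hIter k (f n x) := by
  induction k with
  | zero => rfl
  | succ k ih =>
      show f (n + k + 1) (R.h (R.hIter k x)) = S.h (S.hIter k (f n x))
      rw [hom_h hf, ih]

end General

section Triv
variable {A B : Type} [CommRing A] [CommRing B]

/-- Evaluation of a level of `𝕋(A)` in `A`. -/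
def Efun (A : Type) [CommRing A] : ∀ n, TC A n → A
  | 0 => fun x => if x = 1 then 1 else 0
  | _+1 => fun a => a

lemma zmod2_cases (x : ZMod 2) : x = 0 ∨ x = 1 := by revert x; decide

lemma TData_h_zero (x : TC A 0) :
    (TData A).h (n := 0) x = (if x = 1 then (1 : A) else 0 : TC A 1) := by
  show cast _ _ = _
  rw [cast_triv]
  rfl

lemma TData_h_succ {n : ℕ} (a : TC A (n + 1)) :
    (TData A).h (n := n + 1) a = (a : TC A (n + 2)) := by
  show cast _ _ = _
  erw [cast_triv]
  exact one_mul a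

lemma Efun_h {n : ℕ} (x : TC A n) : Efun A (n + 1) ((TData A).h x) = Efun A n x := by
  cases n with
  | zero => rw [TData_h_zero]; rfl
  | succ n => rw [TData_h_succ]; rfl

lemma Efun_hIter (k : ℕ) {n : ℕ} (x : TC A n) :
    Efun A (n + k) ((TData A).hIter k x) = Efun A n x := by
  induction k with
  | zero => rfl
  | succ k ih => exact (Efun_h _).trans ih

lemma Efun_cast {a b : ℕ} (e : a = b) (x : TC A a) :
    Efun A b (cast (congrArg (TData A).C e) x) = Efun A a x := by subst e; rfl

lemma Efun_add (h2 : ∀ x : A, x + x = 0) {n : ℕ} (x y : TC A n) :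
    Efun A n ((TData A).add x y) = Efun A n x + Efun A n y := by
  cases n with
  | zero =>
      rcases zmod2_cases x with rfl | rfl <;> rcases zmod2_cases y with rfl | rfl <;>
        show Efun A 0 _ = _ <;> simp [Efun, TData]
      exact (h2 1).symm
  | succ n => rfl

lemma Efun_mul {n m : ℕ} (x : TC A n) (y : TC A m) :
    Efun A (n + m) ((TData A).mul x y) = Efun A n x * Efun A m y := by
  cases n with
  | zero =>
      cases m with
      | zero =>
          rcases zmod2_cases x with rfl | rfl <;> rcases zmod2_cases y with rfl | rfl <;>
            show Efun A 0 _ = _ <;> simp [Efun, TData]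
      | succ m =>
          rcases zmod2_cases x with rfl | rfl <;> show Efun A (m + 1) _ = _ <;>
            simp [Efun, TData]
  | succ n =>
      cases m with
      | zero =>
          rcases zmod2_cases y with rfl | rfl <;> show Efun A (n + 1) _ = _ <;>
            simp [Efun, TData]
      | succ m => rfl

lemma Efun_Tmap (g : A →+* B) {n : ℕ} (x : TC A n) :
    Efun B n (Tmap g n x) = g (Efun A n x) := by
  cases n with
  | zero =>
      rcases zmod2_cases x with rfl | rfl <;> simp [Efun, Tmap]
  | succ n => rfl

end Triv

section EquivSec
variable {A B : Type} [CommRing A] [CommRing B]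

/-- The evaluation map `𝔸(𝕋(A)) → A`. -/
noncomputable def EA (A : Type) [CommRing A] : Colim (TData A) → A :=
  Quot.lift (fun p => Efun A p.1 p.2) (by rintro p q rfl; exact (Efun_h p.2).symm)

lemma EA_out (q : Colim (TData A)) : Efun A q.out.1 q.out.2 = EA A q := by
  conv_rhs => rw [← q.out_eq]
  rfl

lemma lift_level (k : ℕ) (a : A) :
    (TData A).cmk (n := k + 1) a = (TData A).cmk (n := 1) a := by
  induction k with
  | zero => rfl
  | succ k ih =>
      have e0 : (TData A).h (n := k + 1) a = a := TData_h_succ (n := k) a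
      have e1 : (TData A).cmk (n := k + 2) a = (TData A).cmk (n := k + 1) a := by
        conv_lhs => rw [← e0]
        exact cmk_h (R := TData A) (n := k + 1) a
      exact e1.trans ih

/-- The natural equivalence `𝔸(𝕋(A)) ≃ A`. -/
noncomputable def EquivA (A : Type) [CommRing A] : Colim (TData A) ≃ A where
  toFun := EA A
  invFun a := (TData A).cmk (n := 1) a
  right_inv a := rfl
  left_inv q := by
    induction q using Quot.ind with
    | _ p =>
      obtain ⟨n, x⟩ := p
      cases n with
      | zero =>
          show (TData A).cmk (n := 1) (Efun A 0 x) = _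
          have e0 : Efun A 0 x = (TData A).h (n := 0) x := (TData_h_zero x).symm
          rw [e0]
          exact cmk_h (n := 0) x
      | succ m => exact (lift_level (A := A) m x).symm

lemma EA_cadd (h2 : ∀ x : A, x + x = 0) (x y : Colim (TData A)) :
    EA A ((TData A).cadd x y) = EA A x + EA A y := by
  show Efun A _ _ = _
  erw [Efun_add h2, Efun_hIter, Efun_cast (Nat.add_comm y.out.1 x.out.1), Efun_hIter,
    EA_out, EA_out]

lemma EA_cmul (x y : Colim (TData A)) :
    EA A ((TData A).cmul x y) = EA A x * EA A y := by
  show Efun A _ _ = _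
  erw [Efun_mul, EA_out, EA_out]

lemma EA_one : EA A ((TData A).cmk ((TData A).top 0)) = 1 := by
  have : Efun A 0 ((TData A).top 0) = 1 := by simp [Efun, TData]
  exact this

lemma EA_cmap (g : A →+* B) (q : Colim (TData A)) :
    EA B (cmap (Tmap g) q) = g (EA A q) := by
  show Efun B _ _ = _
  erw [Efun_Tmap, EA_out]

end EquivSec

section Eta
variable {R : IgrData} (hR : R.IsIgr)
include hR

lemma cmk_zero (n : ℕ) : R.cmk (R.zero n) = R.cmk (R.zero 0) := by
  induction n with
  | zero => rfl
  | succ n ih => rw [← h_zero hR, cmk_h]; exact ih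

lemma cmk_top (n : ℕ) : R.cmk (R.top n) = R.cmk (R.top 0) := by
  induction n with
  | zero => rfl
  | succ n ih => rw [← hR.h_top, cmk_h]; exact ih

lemma eta_zero0 : eta R 0 (R.zero 0) = (0 : ZMod 2) := if_neg hR.zero_ne_top

omit hR in
lemma eta_top0 : eta R 0 (R.top 0) = (1 : ZMod 2) := if_pos rfl

lemma eta_hom : IsIgrHom R (TColim R) (eta R) where
  map_add := by
    intro n x y
    cases n with
    | zero =>
        rcases hR.level0 x with rfl | rfl <;> rcases hR.level0 y with rfl | rfl
        · rw [hR.add_zero, eta_zero0 hR]; rfl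
        · rw [hR.add_comm, hR.add_zero, eta_zero0 hR, eta_top0]; rfl
        · rw [hR.add_zero, eta_zero0 hR, eta_top0]; rfl
        · rw [hR.add_self, eta_zero0 hR, eta_top0]; rfl
    | succ n => exact (cadd_mk hR x y).symm
  map_zero := by
    intro n
    cases n with
    | zero => exact eta_zero0 hR
    | succ n => exact cmk_zero hR (n + 1)
  map_top := by
    intro n
    cases n with
    | zero => exact eta_top0
    | succ n => exact cmk_top hR (n + 1)
  map_mul := by
    intro n m x y
    cases n with
    | zero =>
        cases m with
        | zero =>
            rcases hR.level0 x with rfl | rfl <;> rcases hR.level0 y with rfl | rfl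
            · rw [zero_mul' hR, eta_zero0 hR]; rfl
            · rw [zero_mul' hR, eta_zero0 hR, eta_top0]; rfl
            · rw [mul_zero' hR, eta_zero0 hR, eta_top0]; rfl
            · rw [hR.top_mul_top, eta_top0]; rfl
        | succ m =>
            rcases hR.level0 x with rfl | rfl
            · show R.cmk (R.mul (R.zero 0) y) = _
              rw [zero_mul' hR, cmk_zero hR, eta_zero0 hR]
              rfl
            · show R.cmk (R.mul (R.top 0) y) = _
              rw [eta_top0]
              show _ = if (1 : ZMod 2) = 1 then R.cmk y else R.cmk (R.zero 0)
              rw [if_pos rfl]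
              exact cmk_heq (Nat.zero_add (m + 1))
                ((hR.mul_comm (R.top 0) y).trans (heq_of_eq (hR.mul_top0 y)))
    | succ n =>
        cases m with
        | zero =>
            rcases hR.level0 y with rfl | rfl
            · show R.cmk (R.mul x (R.zero 0)) = _
              rw [mul_zero' hR, cmk_zero hR, eta_zero0 hR]
              rfl
            · show R.cmk (R.mul x (R.top 0)) = _
              rw [eta_top0]
              show _ = if (1 : ZMod 2) = 1 then R.cmk x else R.cmk (R.zero 0)
              rw [if_pos rfl, hR.mul_top0]
        | succ m => exact (cmul_mk hR x y).symm

lemma reflection (A : Type) [CommRing A] (h2 : ∀ x : A, x + x = 0)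
    (f : ∀ n, R.C n → (TData A).C n) (hf : IsIgrHom R (TData A) f) :
    ∃! g : Colim R → A,
      (∀ x y, g (R.cadd x y) = g x + g y) ∧
      (∀ x y, g (R.cmul x y) = g x * g y) ∧
      g (R.cmk (R.top 0)) = 1 ∧
      ∀ n x, TmapF R g n (eta R n x) = f n x := by
  have hsound : ∀ p q, R.colimRel p q →
      Efun A p.1 (f p.1 p.2) = Efun A q.1 (f q.1 q.2) := by
    rintro p q rfl
    show _ = Efun A (p.1 + 1) (f (p.1 + 1) (R.h p.2))
    erw [hom_h hf, Efun_h]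
  set g : Colim R → A := Quot.lift (fun p => Efun A p.1 (f p.1 p.2)) hsound with hgdef
  have gout : ∀ q : Colim R, Efun A q.out.1 (f q.out.1 q.out.2) = g q := by
    intro q; conv_rhs => rw [← q.out_eq]
  have h4 : ∀ n x, TmapF R g n (eta R n x) = f n x := by
    intro n x
    cases n with
    | zero =>
        rcases hR.level0 x with rfl | rfl
        · rw [hf.map_zero 0]; exact eta_zero0 hR
        · rw [hf.map_top 0]; exact eta_top0
    | succ n => rfl
  have key : ∀ (gg : Colim R → A), (∀ n x, TmapF R gg n (eta R n x) = f n x) →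
      ∀ p : Σ n, R.C n, gg (Quot.mk (colimRel R) p) = Efun A (p.1 + 1) (f (p.1 + 1) (R.h p.2)) := by
    rintro gg hgg ⟨n, x⟩
    show gg (R.cmk x) = _
    rw [← cmk_h (x := x)]
    exact hgg (n + 1) (R.h x)
  refine ⟨g, ⟨?_, ?_, ?_, h4⟩, ?_⟩
  · intro x y
    show Efun A _ _ = _
    dsimp only
    erw [hf.map_add, Efun_add h2, hom_hIter hf, Efun_hIter,
      apply_cast f (Nat.add_comm y.out.1 x.out.1), Efun_cast, hom_hIter hf, Efun_hIter,
      gout, gout]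
    omega
  · intro x y
    show Efun A _ _ = _
    dsimp only
    erw [hf.map_mul, Efun_mul, gout, gout]
  · show Efun A 0 (f 0 (R.top 0)) = 1
    rw [hf.map_top]
    simp [Efun, TData]
  · intro g' hg'
    funext q
    induction q using Quot.ind with
    | _ p => exact (key g' hg'.2.2.2 p).trans (key g h4 p).symm

end Eta
end IgrData
open IgrData

/-- The trivial graded ring functor `𝕋 : Ring₂ → Igr` is full and faithful, the
colimit functor `𝔸 : Igr → Ring₂`, `𝔸(R) = colimₙ Rₙ`, is left adjoint to `𝕋`
(the unit `η_R : R → 𝕋(𝔸(R))` is a reflection), and `𝔸 ∘ 𝕋` is naturally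
isomorphic to the identity functor on `Ring₂`. -/
theorem stmt10 :
    -- 𝕋 is faithful
    (∀ (A B : Type) [CommRing A] [CommRing B],
      (∀ x : A, x + x = 0) → (∀ x : B, x + x = 0) →
      ∀ g g' : A →+* B, (∀ n x, Tmap g n x = Tmap g' n x) → g = g') ∧
    -- 𝕋 is full
    (∀ (A B : Type) [CommRing A] [CommRing B],
      (∀ x : A, x + x = 0) → (∀ x : B, x + x = 0) →
      ∀ f : ∀ n, (TData A).C n → (TData B).C n,
        IsIgrHom (TData A) (TData B) f → ∃ g : A →+* B, ∀ n x, f n x = Tmap g n x) ∧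
    -- 𝔸 is left adjoint to 𝕋: the unit `η` is a reflection of `R` along `𝕋`
    (∀ R : IgrData, R.IsIgr →
      IsIgrHom R (TColim R) (eta R) ∧
      ∀ (A : Type) [CommRing A], (∀ x : A, x + x = 0) →
        ∀ f : ∀ n, R.C n → (TData A).C n, IsIgrHom R (TData A) f →
          ∃! g : Colim R → A,
            (∀ x y, g (R.cadd x y) = g x + g y) ∧
            (∀ x y, g (R.cmul x y) = g x * g y) ∧
            g (R.cmk (R.top 0)) = 1 ∧
            ∀ n x, TmapF R g n (eta R n x) = f n x) ∧
    -- 𝔸 ∘ 𝕋 is naturally isomorphic to the identity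
    (∃ E : ∀ (A : Type) (iA : CommRing A), (∀ x : A, x + x = 0) →
        (Colim (@TData A iA) ≃ A),
      (∀ (A : Type) (iA : CommRing A) (h2 : ∀ x : A, x + x = 0),
        (∀ x y, E A iA h2 (cadd (@TData A iA) x y) =
          @HAdd.hAdd A A A _ (E A iA h2 x) (E A iA h2 y)) ∧
        (∀ x y, E A iA h2 (cmul (@TData A iA) x y) =
          @HMul.hMul A A A _ (E A iA h2 x) (E A iA h2 y)) ∧
        E A iA h2 (cmk (@TData A iA) ((@TData A iA).top 0)) = @OfNat.ofNat A 1 _) ∧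
      (∀ (A B : Type) (iA : CommRing A) (iB : CommRing B)
        (h2A : ∀ x : A, x + x = 0) (h2B : ∀ x : B, x + x = 0)
        (g : @RingHom A B _ _) (q : Colim (@TData A iA)),
          E B iB h2B (cmap (@Tmap A B iA iB g) q) = g (E A iA h2A q))) := by
  refine ⟨?_, ?_, ?_, ?_⟩
  · intro A B _ _ _ _ g g' hgg'
    exact RingHom.ext fun a => hgg' 1 a
  · intro A B _ _ _ _ f hf
    have hstep : ∀ (n : ℕ) (a : TC A (n + 1)), f (n + 2) a = f (n + 1) a := by
      intro n a
      have h1 := hom_h hf (n := n + 1) a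
      erw [TData_h_succ, TData_h_succ] at h1
      exact h1
    have hlev : ∀ (n : ℕ) (a : A),
        f (n + 1) (show TC A (n + 1) from a) = f 1 (show TC A 1 from a) := by
      intro n a
      induction n with
      | zero => rfl
      | succ n ih => exact (hstep n a).trans ih
    refine ⟨RingHom.mk' ⟨⟨fun a => f 1 a, hf.map_top 1⟩,
      fun a b => (hstep 0 (a * b)).symm.trans (hf.map_mul 1 1 a b)⟩
      (fun a b => hf.map_add 1 a b), ?_⟩
    intro n x
    cases n with
    | zero =>
        rcases zmod2_cases x with rfl | rfl
        · exact hf.map_zero 0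
        · exact hf.map_top 0
    | succ n => exact hlev n x
  · intro R hR
    exact ⟨eta_hom hR, fun A _ h2 f hf => reflection hR A h2 f hf⟩
  · refine ⟨fun A iA h2 => EquivA A, ?_, ?_⟩
    · intro A iA h2
      exact ⟨EA_cadd h2, EA_cmul, EA_one⟩
    · intro A B iA iB h2A h2B g q
      exact EA_cmap g q

end IgrPaper
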